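/- Let r := H ← c ◇ B be a clause and Δ a filter that is DN for r. If ⟨B | c⟩ is Δ-more general than ⟨H | c⟩, then ⟨H | c⟩ loops with respect to {r} (admits an infinite derivation). -/

import Mathlib

/- A semantic formalization of CLP(X) queries, clauses, derivation steps,
   filters and derivation-neutrality, following Payet & Mesnard. -/

namespace CLP

variable {V D Pr : Type}

/-- A (semantic) term: its evaluation under every valuation. -/
abbrev Trm (V D : Type) := (V → D) → D
/-- A (semantic) constraint: its truth value under every valuation. -/
abbrev Cns (V D : Type) := (V → D) → Prop

/-- The term consisting of a single variable. -/
def varT (x : V) : Trm V D := fun v => v x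

/-- An atom whose arguments are domain elements. -/
structure Atom (D Pr : Type) where
  pred : Pr
  args : List D

/-- A query ⟨p(t̃) | d⟩. -/
structure Query (V D Pr : Type) where
  pred : Pr
  args : List (Trm V D)
  constr : Cns V D

/-- The set of atoms described by a query: Set(⟨p(t̃) | d⟩) = {p([t̃]_v) | D ⊨_v d}. -/
def Query.descSet (Q : Query V D Pr) : Set (Atom D Pr) :=
  { A | ∃ v : V → D, Q.constr v ∧ A = ⟨Q.pred, Q.args.map (fun t => t v)⟩ }

/-- Applying a renaming (a bijection on variables) to a query. -/
def Query.rename (γ : V ≃ V) (Q : Query V D Pr) : Query V D Pr :=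
  ⟨Q.pred, Q.args.map (fun t v => t (v ∘ γ)), fun v => Q.constr (v ∘ γ)⟩

/-- A term only depends on (is supported by) the variables in `S`. -/
def Trm.supp (t : Trm V D) (S : Set V) : Prop :=
  ∀ v w : V → D, (∀ x ∈ S, v x = w x) → t v = t w

/-- A constraint only depends on (is supported by) the variables in `S`. -/
def Cns.supp (c : Cns V D) (S : Set V) : Prop :=
  ∀ v w : V → D, (∀ x ∈ S, v x = w x) → (c v ↔ c w)

/-- All the variables of the query lie in `S`. -/
def Query.suppBy (Q : Query V D Pr) (S : Set V) : Prop :=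
  (∀ t ∈ Q.args, Trm.supp t S) ∧ Cns.supp Q.constr S

/-- The query has finitely many variables (as every syntactic query does). -/
def Query.finSupp (Q : Query V D Pr) : Prop := ∃ S : Finset V, Q.suppBy ↑S

/-- The constraint s̃ = t̃ (componentwise equality of two sequences of terms). -/
def EqArgs (a b : List (Trm V D)) (v : V → D) : Prop :=
  a.length = b.length ∧ ∀ pr ∈ a.zip b, pr.1 v = pr.2 v

/-- A binary clause H ← c ◇ B. -/
structure Clause (V D Pr : Type) where
  hpred : Pr
  hargs : List (Trm V D)
  constr : Cns V D
  bpred : Pr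
  bargs : List (Trm V D)

/-- The query ⟨H | c⟩. -/
def Clause.headQuery (r : Clause V D Pr) : Query V D Pr := ⟨r.hpred, r.hargs, r.constr⟩
/-- The query ⟨B | c⟩. -/
def Clause.bodyQuery (r : Clause V D Pr) : Query V D Pr := ⟨r.bpred, r.bargs, r.constr⟩

/-- Applying a renaming to a clause (producing a variant of the clause). -/
def Clause.rename (γ : V ≃ V) (r : Clause V D Pr) : Clause V D Pr :=
  ⟨r.hpred, r.hargs.map (fun t v => t (v ∘ γ)), fun v => r.constr (v ∘ γ),
   r.bpred, r.bargs.map (fun t v => t (v ∘ γ))⟩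

/-- All the variables of the clause lie in `S`. -/
def Clause.suppBy (r : Clause V D Pr) (S : Set V) : Prop :=
  (∀ t ∈ r.hargs ++ r.bargs, Trm.supp t S) ∧ Cns.supp r.constr S

/-- The clause has finitely many variables. -/
def Clause.finSupp (r : Clause V D Pr) : Prop := ∃ S : Finset V, r.suppBy ↑S

/-- The constraint s̃ = ũ ∧ c ∧ d of the derived query, where the input clause is
    r' = p(s̃) ← c ◇ q(t̃) and the current query is Q = ⟨p(ũ) | d⟩. -/
def stepCns (r' : Clause V D Pr) (Q : Query V D Pr) : Cns V D :=
  fun v => EqArgs r'.hargs Q.args v ∧ r'.constr v ∧ Q.constr v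

/-- A derivation step Q ⟹_r Q₁: there is a variant r' of r variable-disjoint from Q
    (the input clause) such that the constraint s̃ = ũ ∧ c ∧ d is satisfiable, and
    Q₁ = ⟨q(t̃) | s̃ = ũ ∧ c ∧ d⟩. -/
def Step (r : Clause V D Pr) (Q Q₁ : Query V D Pr) : Prop :=
  ∃ γ : V ≃ V, ∃ S S' : Set V,
    Q.suppBy S ∧ (r.rename γ).suppBy S' ∧ Disjoint S S' ∧
    Q.pred = r.hpred ∧
    (∃ v, stepCns (r.rename γ) Q v) ∧
    Q₁ = ⟨(r.rename γ).bpred, (r.rename γ).bargs, stepCns (r.rename γ) Q⟩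

/-- Q₀ loops w.r.t. the program `Prog`: there is an infinite derivation of Prog ∪ {Q₀}. -/
def Loops (Prog : Set (Clause V D Pr)) (Q₀ : Query V D Pr) : Prop :=
  ∃ Qs : ℕ → Query V D Pr, Qs 0 = Q₀ ∧ ∀ n, ∃ r ∈ Prog, Step r (Qs n) (Qs (n + 1))

/-- Projection of a sequence onto a set of (0-based) positions, in increasing order. -/
def projArgs {α : Type} (s : Finset ℕ) (l : List α) : List α :=
  ((s.filter (· < l.length)).sort (· ≤ ·)).filterMap (fun i => l[i]?)

/-- Projection of a query on a set of positions τ. -/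
def Query.proj (τ : Pr → Finset ℕ) (Q : Query V D Pr) : Query V D Pr :=
  ⟨Q.pred, projArgs (τ Q.pred) Q.args, Q.constr⟩

/-- Projection of a query on the complementary set of positions τ̄. -/
def Query.coproj (τ : Pr → Finset ℕ) (Q : Query V D Pr) : Query V D Pr :=
  ⟨Q.pred, projArgs (Finset.range Q.args.length \ τ Q.pred) Q.args, Q.constr⟩

/-- A filter Δ = (τ, δ): a set of positions together with, for each predicate,
    a query over the projected predicate whose constraint is satisfiable. -/
structure PFilter (V D Pr : Type) where
  pos : Pr → Finset ℕ
  delta : Pr → Query V D Pr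
  delta_pred : ∀ p, (delta p).pred = p
  delta_sat : ∀ p, ∃ v, (delta p).constr v

/-- Q satisfies Δ when Set(Q|_τ) ⊆ Set(δ(rel(Q))). -/
def PFilter.Satisfies (Δ : PFilter V D Pr) (Q : Query V D Pr) : Prop :=
  (Q.proj Δ.pos).descSet ⊆ (Δ.delta Q.pred).descSet

/-- Q' is Δ-more general than Q. -/
def PFilter.MoreGen (Δ : PFilter V D Pr) (Q' Q : Query V D Pr) : Prop :=
  (Q.coproj Δ.pos).descSet ⊆ (Q'.coproj Δ.pos).descSet ∧ Δ.Satisfies Q'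

/-- Δ is derivation neutral (DN) for the clause r. -/
def PFilter.DN (Δ : PFilter V D Pr) (r : Clause V D Pr) : Prop :=
  ∀ Q Q₁ : Query V D Pr, Q.finSupp → Step r Q Q₁ →
    Δ.Satisfies Q₁ ∧
    ∀ Q' : Query V D Pr, Q'.finSupp → Δ.MoreGen Q' Q →
      ∃ Q₁', Step r Q' Q₁' ∧ Δ.MoreGen Q₁' Q₁

/-- sat(ũ, Q): taking a fresh variant of Q and existentially quantifying its variables,
    the values of ũ can be matched with the arguments of Q while its constraint holds. -/
def satC (us : List (Trm V D)) (Q : Query V D Pr) : Cns V D :=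
  fun v => ∃ w : V → D, us.length = Q.args.length ∧
    (∀ pr ∈ us.zip Q.args, pr.1 v = pr.2 w) ∧ Q.constr w

/-- First DNlog condition: D ⊨ c → ∀_{X̃|τ(p)} [sat(X̃|τ(p), δ(p)) → ∃_𝒴 c],
    with 𝒴 = Ỹ|τ(q) ∪ local_vars(r). -/
def DNlog1 (Δ : PFilter V D Pr) (p q : Pr) (Xs Ys : List V) (L : Set V) (c : Cns V D) : Prop :=
  ∀ v : V → D, c v →
    ∀ v' : V → D, (∀ x : V, x ∉ projArgs (Δ.pos p) Xs → v' x = v x) →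
      satC ((projArgs (Δ.pos p) Xs).map varT) (Δ.delta p) v' →
      ∃ w : V → D, (∀ x : V, x ∉ projArgs (Δ.pos q) Ys → x ∉ L → w x = v' x) ∧ c w

/-- Second DNlog condition: D ⊨ c → sat(Ỹ|τ(q), δ(q)). -/
def DNlog2 (Δ : PFilter V D Pr) (q : Pr) (Ys : List V) (c : Cns V D) : Prop :=
  ∀ v : V → D, c v → satC ((projArgs (Δ.pos q) Ys).map varT) (Δ.delta q) v

/-- Δ is DNlog for the clause p(X̃) ← c ◇ q(Ỹ) with local variables L. -/
def DNlog (Δ : PFilter V D Pr) (p q : Pr) (Xs Ys : List V) (L : Set V) (c : Cns V D) : Prop :=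
  DNlog1 Δ p q Xs Ys L c ∧ DNlog2 Δ q Ys c

end CLP
namespace CLP

variable {V D Pr : Type}

lemma projArgs_map {α β : Type} (f : α → β) (s : Finset ℕ) (l : List α) :
    projArgs s (l.map f) = (projArgs s l).map f := by
  unfold projArgs
  rw [List.length_map, List.map_filterMap]
  congr 1
  funext i
  simp [List.getElem?_map]

lemma mem_zip_map_self {α β : Type} {f : α → β} {l : List α} {pr : β × α}
    (h : pr ∈ (l.map f).zip l) : ∃ a ∈ l, pr = (f a, a) := by
  induction l with
  | nil => simp at h
  | cons a t ih =>
    simp only [List.map_cons, List.zip_cons_cons, List.mem_cons] at h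
    rcases h with h | h
    · exact ⟨a, List.mem_cons_self, h⟩
    · obtain ⟨b, hb, rfl⟩ := ih h
      exact ⟨b, List.mem_cons_of_mem a hb, rfl⟩

/-- Monotonicity of projected description sets under description-set inclusion. -/
lemma descSet_projArgs_mono (s : Finset ℕ) {Q1 Q2 : Query V D Pr}
    (hp : Q1.pred = Q2.pred)
    (h : Q1.descSet ⊆ Q2.descSet) :
    (Query.descSet ⟨Q1.pred, projArgs s Q1.args, Q1.constr⟩ : Set (Atom D Pr)) ⊆
      Query.descSet ⟨Q2.pred, projArgs s Q2.args, Q2.constr⟩ := by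
  rintro A ⟨v, hv, rfl⟩
  have hmem : (⟨Q1.pred, Q1.args.map (fun t => t v)⟩ : Atom D Pr) ∈ Q1.descSet := ⟨v, hv, rfl⟩
  obtain ⟨w, hw, heq⟩ := h hmem
  have hargs : Q1.args.map (fun t => t v) = Q2.args.map (fun t => t w) := by
    have := congrArg Atom.args heq; simpa using this
  refine ⟨w, hw, ?_⟩
  have : (projArgs s Q1.args).map (fun t => t v) = (projArgs s Q2.args).map (fun t => t w) := by
    rw [← projArgs_map, ← projArgs_map, hargs]
  simp only [this, hp]

lemma descSet_coproj_mono (τ : Pr → Finset ℕ) {Q1 Q2 : Query V D Pr}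
    (hp : Q1.pred = Q2.pred) (hl : Q1.args.length = Q2.args.length)
    (h : Q1.descSet ⊆ Q2.descSet) :
    (Q1.coproj τ).descSet ⊆ (Q2.coproj τ).descSet := by
  unfold Query.coproj
  rw [show Finset.range Q2.args.length \ τ Q2.pred = Finset.range Q1.args.length \ τ Q1.pred from by rw [hp, hl]]
  exact descSet_projArgs_mono _ hp h

lemma descSet_proj_mono (τ : Pr → Finset ℕ) {Q1 Q2 : Query V D Pr}
    (hp : Q1.pred = Q2.pred)
    (h : Q1.descSet ⊆ Q2.descSet) :
    (Q1.proj τ).descSet ⊆ (Q2.proj τ).descSet := by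
  unfold Query.proj
  rw [show τ Q2.pred = τ Q1.pred from by rw [hp]]
  exact descSet_projArgs_mono _ hp h

lemma Trm.supp.mono {t : Trm V D} {S S' : Set V} (h : Trm.supp t S) (hss : S ⊆ S') :
    Trm.supp t S' := fun v w hvw => h v w fun x hx => hvw x (hss hx)

lemma Cns.supp.mono {c : Cns V D} {S S' : Set V} (h : Cns.supp c S) (hss : S ⊆ S') :
    Cns.supp c S' := fun v w hvw => h v w fun x hx => hvw x (hss hx)

/-- A derivation step from a finitely supported query (with a finitely supported clause)
    yields a finitely supported query. -/
lemma step_finSupp {r : Clause ℕ D Pr} {Q Q₁ : Query ℕ D Pr}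
    (hr : r.finSupp) (hQ : Q.finSupp) (hs : Step r Q Q₁) : Q₁.finSupp := by
  obtain ⟨T, hT⟩ := hQ
  obtain ⟨T₀, hT₀⟩ := hr
  obtain ⟨γ, S, S', _, _, _, _, _, rfl⟩ := hs
  refine ⟨T ∪ T₀.image γ, ?_, ?_⟩
  · -- terms
    intro t' ht'
    simp only [Clause.rename] at ht'
    obtain ⟨t, ht, rfl⟩ := List.mem_map.mp ht'
    intro v w hvw
    refine hT₀.1 t (List.mem_append.mpr (Or.inr ht)) (v ∘ γ) (w ∘ γ) ?_
    intro x hx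
    exact hvw (γ x) (by
      simp only [Finset.coe_union, Set.mem_union, Finset.coe_image, Set.mem_image]
      exact Or.inr ⟨x, hx, rfl⟩)
  · -- constraint
    intro v w hvw
    have hvwT : ∀ x ∈ (T : Set ℕ), v x = w x := fun x hx =>
      hvw x (by simp only [Finset.coe_union, Set.mem_union]; exact Or.inl hx)
    have hvwT₀ : ∀ x ∈ (T₀ : Set ℕ), (v ∘ γ) x = (w ∘ γ) x := fun x hx =>
      hvw (γ x) (by
        simp only [Finset.coe_union, Set.mem_union, Finset.coe_image, Set.mem_image]
        exact Or.inr ⟨x, hx, rfl⟩)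
    have hterm : ∀ pr ∈ ((r.rename γ).hargs).zip Q.args, pr.1 v = pr.1 w ∧ pr.2 v = pr.2 w := by
      intro pr hpr
      have h1 := (List.of_mem_zip hpr).1
      have h2 := (List.of_mem_zip hpr).2
      constructor
      · simp only [Clause.rename] at h1
        obtain ⟨t, ht, heq⟩ := List.mem_map.mp h1
        rw [← heq]
        exact hT₀.1 t (List.mem_append.mpr (Or.inl ht)) _ _ hvwT₀
      · exact hT.1 pr.2 h2 v w hvwT
    unfold stepCns EqArgs
    constructor
    · rintro ⟨⟨hl, heqs⟩, hc1, hc2⟩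
      refine ⟨⟨hl, fun pr hpr => ?_⟩, ?_, ?_⟩
      · rw [← (hterm pr hpr).1, ← (hterm pr hpr).2]; exact heqs pr hpr
      · exact (hT₀.2 (v ∘ γ) (w ∘ γ) hvwT₀).mp hc1
      · exact (hT.2 v w hvwT).mp hc2
    · rintro ⟨⟨hl, heqs⟩, hc1, hc2⟩
      refine ⟨⟨hl, fun pr hpr => ?_⟩, ?_, ?_⟩
      · rw [(hterm pr hpr).1, (hterm pr hpr).2]; exact heqs pr hpr
      · exact (hT₀.2 (v ∘ γ) (w ∘ γ) hvwT₀).mpr hc1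
      · exact (hT.2 v w hvwT).mpr hc2

/-- The shift involution on ℕ: swaps [0,N) with [N,2N). -/
def shiftEquiv (N : ℕ) : ℕ ≃ ℕ where
  toFun x := if x < N then x + N else if x < 2*N then x - N else x
  invFun x := if x < N then x + N else if x < 2*N then x - N else x
  left_inv := by intro x; dsimp only; split_ifs <;> omega
  right_inv := by intro x; dsimp only; split_ifs <;> omega

end CLP

namespace CLP

/-- From the head query there is a derivation step to a query with the same
    description set as the body query. -/
lemma head_step {D Pr : Type} (r : Clause ℕ D Pr) (hr : r.finSupp) (hc : ∃ v, r.constr v) :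
    ∃ Q₁ : Query ℕ D Pr, Step r r.headQuery Q₁ ∧ Q₁.descSet = r.bodyQuery.descSet ∧
      Q₁.pred = r.bodyQuery.pred ∧ Q₁.args.length = r.bodyQuery.args.length := by
  classical
  obtain ⟨S₀, hS⟩ := hr
  set N := S₀.sup id + 1 with hN
  have hlt : ∀ x ∈ S₀, x < N := fun x hx => Nat.lt_succ_of_le (Finset.le_sup (f := id) hx)
  set γ := shiftEquiv N with hγ
  have hγval : ∀ x, x < N → γ x = x + N := by
    intro x hx
    simp only [hγ, shiftEquiv, Equiv.coe_fn_mk, if_pos hx]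
  -- the valuation transformer
  set vW : (ℕ → D) → (ℕ → D) := fun w x => if N ≤ x ∧ x < 2*N then w (x - N) else w x with hvW
  have hva : ∀ (w : ℕ → D) x, x < N → vW w x = w x := by
    intro w x hx
    simp only [hvW]
    rw [if_neg]; omega
  have hvb : ∀ (w : ℕ → D) x, x < N → vW w (γ x) = w x := by
    intro w x hx
    rw [hγval x hx]
    simp only [hvW]
    rw [if_pos (by omega)]
    congr 1; omega
  have hcomp : ∀ (w : ℕ → D), ∀ t ∈ r.hargs ++ r.bargs, t (vW w ∘ γ) = t w := by
    intro w t ht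
    exact hS.1 t ht _ _ (fun x hx => hvb w x (hlt x hx))
  have heqv : ∀ (w : ℕ → D), ∀ t ∈ r.hargs ++ r.bargs, t (vW w) = t w := by
    intro w t ht
    exact hS.1 t ht _ _ (fun x hx => hva w x (hlt x hx))
  have hcns1 : ∀ (w : ℕ → D), r.constr (vW w ∘ γ) ↔ r.constr w :=
    fun w => hS.2 _ _ (fun x hx => hvb w x (hlt x hx))
  have hcns2 : ∀ (w : ℕ → D), r.constr (vW w) ↔ r.constr w :=
    fun w => hS.2 _ _ (fun x hx => hva w x (hlt x hx))
  -- the key satisfaction fact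
  have hkey : ∀ (w : ℕ → D), r.constr w → stepCns (r.rename γ) r.headQuery (vW w) := by
    intro w hw
    refine ⟨⟨by simp [Clause.rename, Clause.headQuery], ?_⟩, ?_, ?_⟩
    · intro pr hpr
      have hpr' : pr ∈ (r.hargs.map (fun t v => t (v ∘ γ))).zip r.hargs := hpr
      obtain ⟨t, ht, rfl⟩ := mem_zip_map_self hpr'
      have h1 : t (vW w ∘ γ) = t w := hcomp w t (List.mem_append.mpr (Or.inl ht))
      have h2 : t (vW w) = t w := heqv w t (List.mem_append.mpr (Or.inl ht))
      simpa [h1] using h2.symm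
    · exact (hcns1 w).mpr hw
    · exact (hcns2 w).mpr hw
  refine ⟨⟨(r.rename γ).bpred, (r.rename γ).bargs, stepCns (r.rename γ) r.headQuery⟩,
    ⟨γ, ↑S₀, γ '' ↑S₀, ?_, ?_, ?_, rfl, ?_, rfl⟩, ?_, rfl, by simp [Clause.rename, Clause.bodyQuery]⟩
  · exact ⟨fun t ht => hS.1 t (List.mem_append.mpr (Or.inl ht)), hS.2⟩
  · constructor
    · intro t' ht'
      have ht'' : t' ∈ (r.hargs ++ r.bargs).map (fun t v => t (v ∘ γ)) := by
        simpa [Clause.rename, List.map_append] using ht'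
      obtain ⟨t, ht, rfl⟩ := List.mem_map.mp ht''
      intro v w hvw
      exact hS.1 t ht _ _ (fun x hx => hvw (γ x) ⟨x, hx, rfl⟩)
    · intro v w hvw
      exact hS.2 _ _ (fun x hx => hvw (γ x) ⟨x, hx, rfl⟩)
  · rw [Set.disjoint_left]
    rintro x hx ⟨y, hy, hyx⟩
    have hxN := hlt x hx
    have hyN := hlt y hy
    rw [hγval y hyN] at hyx
    omega
  · obtain ⟨w₀, hw₀⟩ := hc
    exact ⟨vW w₀, hkey w₀ hw₀⟩
  · -- description-set equality
    ext A
    constructor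
    · rintro ⟨v, hv, rfl⟩
      refine ⟨v ∘ γ, hv.2.1, ?_⟩
      simp [Clause.rename, Clause.bodyQuery, List.map_map, Function.comp]
    · rintro ⟨w, hw, rfl⟩
      refine ⟨vW w, hkey w hw, ?_⟩
      have : ∀ t ∈ r.bargs, (fun v => t (v ∘ γ)) (vW w) = t w := by
        intro t ht
        exact hcomp w t (List.mem_append.mpr (Or.inr ht))
      simp only [Clause.rename, Clause.bodyQuery, List.map_map]
      congr 1
      exact (List.map_congr_left (fun t ht => (this t ht))).symm

end CLP

theorem head_loops_of_dn {D Pr : Type} (r : CLP.Clause ℕ D Pr) (Δ : CLP.PFilter ℕ D Pr)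
    (hr : r.finSupp) (hc : ∃ v, r.constr v)
    (hdn : Δ.DN r) (hmg : Δ.MoreGen r.bodyQuery r.headQuery) :
    CLP.Loops {r} r.headQuery := by
  classical
  have hH : r.headQuery.finSupp := by
    obtain ⟨S₀, hS⟩ := hr
    exact ⟨S₀, fun t ht => hS.1 t (List.mem_append.mpr (Or.inl ht)), hS.2⟩
  obtain ⟨Q₁, hstep, hdesc, hpred, hlen⟩ := CLP.head_step r hr hc
  have hsat1 : Δ.Satisfies Q₁ := (hdn _ _ hH hstep).1
  have hmg1 : Δ.MoreGen Q₁ r.headQuery := by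
    refine ⟨hmg.1.trans ?_, hsat1⟩
    exact CLP.descSet_coproj_mono Δ.pos hpred.symm hlen.symm (by rw [hdesc])
  let T := {p : CLP.Query ℕ D Pr × CLP.Query ℕ D Pr //
      p.1.finSupp ∧ CLP.Step r p.1 p.2 ∧ Δ.MoreGen p.2 p.1}
  have next : ∀ t : T, {t' : T // t'.1.1 = t.1.2} := by
    rintro ⟨⟨Q, Q'⟩, h1, h2, h3⟩
    have h := (hdn Q Q' h1 h2).2 Q' (CLP.step_finSupp hr h1 h2) h3
    exact ⟨⟨⟨Q', h.choose⟩, CLP.step_finSupp hr h1 h2, h.choose_spec.1, h.choose_spec.2⟩, rfl⟩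
  let seq : ℕ → T := fun n =>
    Nat.rec (⟨⟨r.headQuery, Q₁⟩, hH, hstep, hmg1⟩ : T) (fun _ t => (next t).1) n
  have hseq : ∀ n, (seq (n+1)).1.1 = (seq n).1.2 := fun n => (next (seq n)).2
  refine ⟨fun n => (seq n).1.1, rfl, fun n => ⟨r, rfl, ?_⟩⟩
  show CLP.Step r (seq n).1.1 (seq (n+1)).1.1
  rw [hseq n]
  exact (seq n).2.2.1
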